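/- Let a_0, a_1, a_2, b_0, b_1, b_2 ∈ ℝ³. Let T = {(s_1, s_2) ∈ ℝ² : s_1 ≥ 0, s_2 ≥ 0, s_1 + s_2 ≤ 1} be the standard 2-simplex, and define X(s_1, s_2, t) = (1−t)(a_0 + s_1(a_1 − a_0) + s_2(a_2 − a_0)) + t(b_0 + s_1(b_1 − b_0) + s_2(b_2 − b_0)) for (s_1, s_2) ∈ T, t ∈ [0,1]. Set d_k = b_k − a_k for k = 0, 1, 2, A⁰ = (a_1 − a_0) × (a_2 − a_0), A¹ = (b_1 − b_0) × (b_2 − b_0), and A^{1/2} = (c_1 − c_0) × (c_2 − c_0) with c_k = (a_k + b_k)/2. Then ∫_0^1 ∫_T det(∂_{s_1} X, ∂_{s_2} X, ∂_t X) ds_1 ds_2 dt = (1/36) (d_0 + d_1 + d_2) · (A⁰ + 4 A^{1/2} + A¹). -/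

import Mathlib

open Matrix

open MeasureTheory Set

def triSet : Set (ℝ × ℝ) := {s : ℝ × ℝ | 0 ≤ s.1 ∧ 0 ≤ s.2 ∧ s.1 + s.2 ≤ 1}

lemma triSet_closed : IsClosed triSet := by
  have : triSet = {s : ℝ × ℝ | 0 ≤ s.1} ∩ ({s : ℝ × ℝ | 0 ≤ s.2} ∩ {s : ℝ × ℝ | s.1 + s.2 ≤ 1}) := by
    rfl
  rw [this]
  exact (isClosed_le continuous_const continuous_fst).inter
    ((isClosed_le continuous_const continuous_snd).inter
      (isClosed_le (continuous_fst.add continuous_snd) continuous_const))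

lemma triSet_meas : MeasurableSet triSet := triSet_closed.measurableSet

lemma triSet_compact : IsCompact triSet := by
  refine (isCompact_Icc (a := ((0:ℝ),(0:ℝ))) (b := (1,1))).of_isClosed_subset triSet_closed ?_
  rintro ⟨x, y⟩ ⟨h1, h2, h3⟩
  constructor <;> constructor <;> simp_all <;> linarith

lemma int01 (L p q : ℝ) : ∫ y in (0:ℝ)..L, (p + q*y) = p*L + q*L^2/2 := by
  have h1 : IntervalIntegrable (fun _ : ℝ => p) volume 0 L := intervalIntegrable_const
  have h2 : IntervalIntegrable (fun y : ℝ => q*y) volume 0 L :=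
    (by fun_prop : Continuous _).intervalIntegrable _ _
  rw [intervalIntegral.integral_add h1 h2, intervalIntegral.integral_const,
    intervalIntegral.integral_const_mul]
  simp [integral_id]
  ring

lemma int02 (p q r : ℝ) : ∫ x in (0:ℝ)..1, (p + q*x + r*x^2) = p + q/2 + r/3 := by
  have h1 : IntervalIntegrable (fun _ : ℝ => p) volume 0 1 := intervalIntegrable_const
  have h2 : IntervalIntegrable (fun y : ℝ => q*y) volume 0 1 :=
    (by fun_prop : Continuous _).intervalIntegrable _ _
  have h3 : IntervalIntegrable (fun y : ℝ => r*y^2) volume 0 1 :=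
    (by fun_prop : Continuous _).intervalIntegrable _ _
  rw [intervalIntegral.integral_add (h1.add h2) h3, intervalIntegral.integral_add h1 h2,
    intervalIntegral.integral_const, intervalIntegral.integral_const_mul,
    intervalIntegral.integral_const_mul, integral_pow]
  simp [integral_id]
  ring

lemma tri_integral (a b c : ℝ) :
    (∫ s in triSet, (a + b * s.1 + c * s.2)) = a/2 + b/6 + c/6 := by
  have hcont : Continuous (fun s : ℝ × ℝ => a + b * s.1 + c * s.2) := by fun_prop
  have hint : IntegrableOn (fun s : ℝ × ℝ => a + b * s.1 + c * s.2) triSet :=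
    hcont.continuousOn.integrableOn_compact triSet_compact
  rw [← integral_indicator triSet_meas]
  rw [MeasureTheory.Measure.volume_eq_prod]
  rw [MeasureTheory.integral_prod _ (by
    rw [← Measure.volume_eq_prod, integrable_indicator_iff triSet_meas]; exact hint)]
  have inner : ∀ x : ℝ, (∫ y : ℝ, triSet.indicator (fun s : ℝ × ℝ => a + b * s.1 + c * s.2) (x, y))
      = (Icc (0:ℝ) 1).indicator (fun x => (a + b*x)*(1-x) + c*(1-x)^2/2) x := by
    intro x
    by_cases hx : x ∈ Icc (0:ℝ) 1
    · obtain ⟨hx0, hx1⟩ := hx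
      have heq : ∀ y : ℝ, triSet.indicator (fun s : ℝ × ℝ => a + b * s.1 + c * s.2) (x, y)
          = (Icc (0:ℝ) (1-x)).indicator (fun y => a + b * x + c * y) y := by
        intro y
        by_cases hy : y ∈ Icc (0:ℝ) (1-x)
        · have hmem : (x, y) ∈ triSet := by
            simp only [triSet, mem_setOf_eq]
            exact ⟨hx0, hy.1, by have := hy.2; linarith⟩
          rw [indicator_of_mem hy, indicator_of_mem hmem]
        · have hmem : (x, y) ∉ triSet := by
            intro h
            simp only [triSet, mem_setOf_eq] at h
            exact hy ⟨h.2.1, by have := h.2.2; simp only [mem_Icc] at *; linarith⟩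
          rw [indicator_of_notMem hy, indicator_of_notMem hmem]
      simp_rw [heq]
      rw [integral_indicator measurableSet_Icc, MeasureTheory.integral_Icc_eq_integral_Ioc,
        ← intervalIntegral.integral_of_le (by linarith : (0:ℝ) ≤ 1 - x), int01]
      rw [indicator_of_mem (mem_Icc.mpr ⟨hx0, hx1⟩)]
    · have heq : ∀ y : ℝ, triSet.indicator (fun s : ℝ × ℝ => a + b * s.1 + c * s.2) (x, y) = 0 := by
        intro y
        refine indicator_of_notMem ?_ _
        intro h
        simp only [triSet, mem_setOf_eq] at h
        rcases h with ⟨h1, h2, h3⟩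
        simp only [mem_Icc, not_and, not_le] at hx
        have := hx h1
        linarith
      simp_rw [heq]
      rw [indicator_of_notMem hx]
      simp
  simp_rw [inner]
  rw [integral_indicator measurableSet_Icc, MeasureTheory.integral_Icc_eq_integral_Ioc,
    ← intervalIntegral.integral_of_le (by norm_num : (0:ℝ) ≤ 1)]
  have : ∀ x : ℝ, (a + b*x)*(1-x) + c*(1-x)^2/2
      = (a + c/2) + (b - a - c)*x + (c/2 - b)*x^2 := by intro x; ring
  simp_rw [this, int02]
  ring

open Matrix

lemma deriv_const_add_smul (C M : Fin 3 → ℝ) (p : ℝ) :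
    deriv (fun x : ℝ => C + x • M) p = M := by
  have : HasDerivAt (fun x : ℝ => C + x • M) M p := by
    simpa using (((hasDerivAt_id p).smul_const M).const_add C)
  exact this.deriv


lemma cross_dot_affine (W d e f : Fin 3 → ℝ) (x y : ℝ) :
    W ⬝ᵥ (d + x • e + y • f) = W ⬝ᵥ d + (W ⬝ᵥ e) * x + (W ⬝ᵥ f) * y := by
  rw [dotProduct_add, dotProduct_add, dotProduct_smul, dotProduct_smul]
  simp only [smul_eq_mul]
  ring

lemma cross_quad (P Q R S D : Fin 3 → ℝ) (t : ℝ) :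
    crossProduct ((1-t) • P + t • Q) ((1-t) • R + t • S) ⬝ᵥ D =
      (crossProduct P R ⬝ᵥ D)
      + ((crossProduct P S ⬝ᵥ D) + (crossProduct Q R ⬝ᵥ D) - 2*(crossProduct P R ⬝ᵥ D))*t
      + ((crossProduct P R ⬝ᵥ D) - (crossProduct P S ⬝ᵥ D) - (crossProduct Q R ⬝ᵥ D)
          + (crossProduct Q S ⬝ᵥ D))*t^2 := by
  simp only [map_add, _root_.map_smul, LinearMap.add_apply, LinearMap.smul_apply,
    add_dotProduct, smul_dotProduct, smul_eq_mul]
  ring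

/-- The signed volume swept by a triangle moving by linear interpolation from
`(a₀,a₁,a₂)` to `(b₀,b₁,b₂)` equals `(1/36)(d₀+d₁+d₂)·(A⁰+4A^{1/2}+A¹)`,
where `d_k = b_k - a_k` are the vertex displacements and `A⁰, A^{1/2}, A¹` are
the orientation vectors of the initial, midpoint and final triangles
(per-element `d = 3` content of Lemma 3.1 combined with Remark 3.1). -/
theorem stmt10 (a0 a1 a2 b0 b1 b2 : Fin 3 → ℝ)
    (T : Set (ℝ × ℝ)) (hT : T = {s : ℝ × ℝ | 0 ≤ s.1 ∧ 0 ≤ s.2 ∧ s.1 + s.2 ≤ 1})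
    (X : ℝ → ℝ → ℝ → Fin 3 → ℝ)
    (hX : ∀ s1 s2 t, X s1 s2 t =
      (1 - t) • (a0 + s1 • (a1 - a0) + s2 • (a2 - a0)) +
        t • (b0 + s1 • (b1 - b0) + s2 • (b2 - b0)))
    (d0 d1 d2 : Fin 3 → ℝ)
    (hd0 : d0 = b0 - a0) (hd1 : d1 = b1 - a1) (hd2 : d2 = b2 - a2)
    (c0 c1 c2 : Fin 3 → ℝ)
    (hc0 : c0 = (2:ℝ)⁻¹ • (a0 + b0)) (hc1 : c1 = (2:ℝ)⁻¹ • (a1 + b1))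
    (hc2 : c2 = (2:ℝ)⁻¹ • (a2 + b2))
    (A0 Ah A1 : Fin 3 → ℝ)
    (hA0 : A0 = crossProduct (a1 - a0) (a2 - a0))
    (hAh : Ah = crossProduct (c1 - c0) (c2 - c0))
    (hA1 : A1 = crossProduct (b1 - b0) (b2 - b0)) :
    (∫ t in (0:ℝ)..1, ∫ s in T,
        crossProduct (deriv (fun x => X x s.2 t) s.1)
            (deriv (fun y => X s.1 y t) s.2) ⬝ᵥ
          deriv (fun τ => X s.1 s.2 τ) t) =
      (36:ℝ)⁻¹ * ((d0 + d1 + d2) ⬝ᵥ (A0 + (4:ℝ) • Ah + A1)) := by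
  have hTtri : T = triSet := hT
  -- derivative computations
  have hds1 : ∀ (s2 t s1 : ℝ), deriv (fun x => X x s2 t) s1
      = (1-t) • (a1 - a0) + t • (b1 - b0) := by
    intro s2 t s1
    have hfun : (fun x => X x s2 t)
        = fun x => ((1-t) • (a0 + s2 • (a2 - a0)) + t • (b0 + s2 • (b2 - b0)))
            + x • ((1-t) • (a1 - a0) + t • (b1 - b0)) := by
      funext x; rw [hX]; module
    rw [hfun, deriv_const_add_smul]
  have hds2 : ∀ (s1 t s2 : ℝ), deriv (fun y => X s1 y t) s2
      = (1-t) • (a2 - a0) + t • (b2 - b0) := by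
    intro s1 t s2
    have hfun : (fun y => X s1 y t)
        = fun y => ((1-t) • (a0 + s1 • (a1 - a0)) + t • (b0 + s1 • (b1 - b0)))
            + y • ((1-t) • (a2 - a0) + t • (b2 - b0)) := by
      funext y; rw [hX]; module
    rw [hfun, deriv_const_add_smul]
  have hdt : ∀ (s1 s2 t : ℝ), deriv (fun τ => X s1 s2 τ) t
      = d0 + s1 • (d1 - d0) + s2 • (d2 - d0) := by
    intro s1 s2 t
    have hfun : (fun τ => X s1 s2 τ)
        = fun τ => (a0 + s1 • (a1 - a0) + s2 • (a2 - a0))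
            + τ • (d0 + s1 • (d1 - d0) + s2 • (d2 - d0)) := by
      funext τ; rw [hX, hd0, hd1, hd2]; module
    rw [hfun, deriv_const_add_smul]
  -- inner integral over the triangle
  have hinner : ∀ t : ℝ, (∫ s in T,
      crossProduct (deriv (fun x => X x s.2 t) s.1) (deriv (fun y => X s.1 y t) s.2) ⬝ᵥ
        deriv (fun τ => X s.1 s.2 τ) t)
      = (crossProduct ((1-t) • (a1 - a0) + t • (b1 - b0))
          ((1-t) • (a2 - a0) + t • (b2 - b0)) ⬝ᵥ (d0 + d1 + d2))/6 := by
    intro t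
    have hfun : (fun s : ℝ × ℝ =>
        crossProduct (deriv (fun x => X x s.2 t) s.1) (deriv (fun y => X s.1 y t) s.2) ⬝ᵥ
          deriv (fun τ => X s.1 s.2 τ) t)
        = fun s : ℝ × ℝ =>
            (crossProduct ((1-t) • (a1 - a0) + t • (b1 - b0))
              ((1-t) • (a2 - a0) + t • (b2 - b0)) ⬝ᵥ d0)
          + (crossProduct ((1-t) • (a1 - a0) + t • (b1 - b0))
              ((1-t) • (a2 - a0) + t • (b2 - b0)) ⬝ᵥ (d1 - d0)) * s.1
          + (crossProduct ((1-t) • (a1 - a0) + t • (b1 - b0))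
              ((1-t) • (a2 - a0) + t • (b2 - b0)) ⬝ᵥ (d2 - d0)) * s.2 := by
      funext s
      rw [hds1, hds2, hdt, cross_dot_affine]
    rw [hfun, hTtri, tri_integral]
    rw [dotProduct_sub, dotProduct_sub, dotProduct_add, dotProduct_add]
    ring
  rw [intervalIntegral.integral_congr (fun t _ => hinner t)]
  -- quadratic expansion in t and Simpson-exact integration
  have hq : (fun t : ℝ =>
      (crossProduct ((1-t) • (a1 - a0) + t • (b1 - b0))
        ((1-t) • (a2 - a0) + t • (b2 - b0)) ⬝ᵥ (d0 + d1 + d2))/6)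
      = fun t : ℝ =>
          (crossProduct (a1 - a0) (a2 - a0) ⬝ᵥ (d0 + d1 + d2))/6
        + (((crossProduct (a1 - a0) (b2 - b0) ⬝ᵥ (d0 + d1 + d2))
            + (crossProduct (b1 - b0) (a2 - a0) ⬝ᵥ (d0 + d1 + d2))
            - 2*(crossProduct (a1 - a0) (a2 - a0) ⬝ᵥ (d0 + d1 + d2)))/6)*t
        + (((crossProduct (a1 - a0) (a2 - a0) ⬝ᵥ (d0 + d1 + d2))
            - (crossProduct (a1 - a0) (b2 - b0) ⬝ᵥ (d0 + d1 + d2))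
            - (crossProduct (b1 - b0) (a2 - a0) ⬝ᵥ (d0 + d1 + d2))
            + (crossProduct (b1 - b0) (b2 - b0) ⬝ᵥ (d0 + d1 + d2)))/6)*t^2 := by
    funext t
    rw [cross_quad]
    ring
  rw [hq, int02]
  -- right-hand side
  have hc10 : c1 - c0 = (2:ℝ)⁻¹ • ((a1 - a0) + (b1 - b0)) := by
    rw [hc0, hc1]; module
  have hc20 : c2 - c0 = (2:ℝ)⁻¹ • ((a2 - a0) + (b2 - b0)) := by
    rw [hc0, hc2]; module
  have hAh' : (4:ℝ) • Ah = crossProduct (a1 - a0) (a2 - a0) + crossProduct (a1 - a0) (b2 - b0)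
      + crossProduct (b1 - b0) (a2 - a0) + crossProduct (b1 - b0) (b2 - b0) := by
    rw [hAh, hc10, hc20]
    simp only [map_add, _root_.map_smul, LinearMap.add_apply, LinearMap.smul_apply]
    module
  rw [hA0, hA1, hAh']
  simp only [dotProduct_add, dotProduct_comm (d0 + d1 + d2), add_dotProduct]
  ring
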